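/- For every permutation π ∈ S_n avoiding the pattern 132, the set of values of the left-to-right maxima of π, read from left to right, forms the sequence of consecutive integers π(1), π(1)+1, π(1)+2, ..., n. -/
import Mathlib


open Finset
open scoped Classical

/-- Number of components of a permutation of `Fin n` (0-based version of
`|{i ∈ [n] : π(j) ≤ i for all j ≤ i}|`). -/
def comps {n : ℕ} (π : Equiv.Perm (Fin n)) : ℕ :=
  (Finset.univ.filter fun i : Fin n => ∀ j, j ≤ i → π j ≤ i).card

/-- Number of descents. -/
def des {n : ℕ} (π : Equiv.Perm (Fin n)) : ℕ :=
  (Finset.univ.filter fun i : Fin n =>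
    ∃ h : (i : ℕ) + 1 < n, π ⟨(i : ℕ) + 1, h⟩ < π i).card

/-- Length of the initial ascending run: `min(DES(π) ∪ {n})` with 1-based descent positions. -/
noncomputable def iar {n : ℕ} (π : Equiv.Perm (Fin n)) : ℕ :=
  sInf {k : ℕ | k = n ∨ 0 < k ∧ ∃ h : k < n, π ⟨k, h⟩ < π ⟨k - 1, by omega⟩}

/-- `π` contains the pattern `σ`. -/
def ContainsPat {n m : ℕ} (π : Equiv.Perm (Fin n)) (σ : Equiv.Perm (Fin m)) : Prop :=
  ∃ f : Fin m → Fin n, StrictMono f ∧ ∀ a b : Fin m, σ a < σ b ↔ π (f a) < π (f b)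

/-- `π` avoids the pattern `σ`. -/
def AvoidsPat {n m : ℕ} (π : Equiv.Perm (Fin n)) (σ : Equiv.Perm (Fin m)) : Prop :=
  ¬ ContainsPat π σ

def pat123 : Equiv.Perm (Fin 3) := ⟨![0, 1, 2], ![0, 1, 2], by decide, by decide⟩
def pat132 : Equiv.Perm (Fin 3) := ⟨![0, 2, 1], ![0, 2, 1], by decide, by decide⟩
def pat213 : Equiv.Perm (Fin 3) := ⟨![1, 0, 2], ![1, 0, 2], by decide, by decide⟩
def pat231 : Equiv.Perm (Fin 3) := ⟨![1, 2, 0], ![2, 0, 1], by decide, by decide⟩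
def pat312 : Equiv.Perm (Fin 3) := ⟨![2, 0, 1], ![1, 2, 0], by decide, by decide⟩
def pat321 : Equiv.Perm (Fin 3) := ⟨![2, 1, 0], ![2, 1, 0], by decide, by decide⟩

/-- Direct sum of two permutations. -/
def directSum {m l : ℕ} (π : Equiv.Perm (Fin m)) (σ : Equiv.Perm (Fin l)) :
    Equiv.Perm (Fin (m + l)) :=
  finSumFinEquiv.permCongr (Equiv.sumCongr π σ)

/-- Direct sum of a finite family of permutations. -/
def dsum : {k : ℕ} → (a : Fin k → ℕ) → ((i : Fin k) → Equiv.Perm (Fin (a i))) →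
    Equiv.Perm (Fin (∑ i, a i))
  | 0, _, _ => Equiv.refl _
  | _ + 1, a, τ =>
      (finCongr (Fin.sum_univ_succ a).symm).permCongr
        (directSum (τ 0) (dsum (fun i => a i.succ) (fun i => τ i.succ)))

/-- Set of values of left-to-right maxima. -/
noncomputable def LMAX {n : ℕ} (π : Equiv.Perm (Fin n)) : Finset (Fin n) :=
  Finset.univ.filter fun v => ∃ i, π i = v ∧ ∀ j, j < i → π j < v

/-- Set of values of left-to-right minima. -/
noncomputable def LMIN {n : ℕ} (π : Equiv.Perm (Fin n)) : Finset (Fin n) :=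
  Finset.univ.filter fun v => ∃ i, π i = v ∧ ∀ j, j < i → v < π j

/-- Set of descent bottoms. -/
noncomputable def DESB {n : ℕ} (π : Equiv.Perm (Fin n)) : Finset (Fin n) :=
  Finset.univ.filter fun v => ∃ i : ℕ, ∃ h : i + 1 < n,
    π ⟨i + 1, h⟩ = v ∧ π ⟨i + 1, h⟩ < π ⟨i, by omega⟩

lemma strictMono_vec3 {n : ℕ} (x y z : Fin n) (h1 : x < y) (h2 : y < z) :
    StrictMono ![x,y,z] := by
  intro a b hab
  fin_cases a <;> fin_cases b <;> simp <;>
    first | exact h1 | exact h2 | exact h1.trans h2 | exact absurd hab (by decide)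

lemma pat132_vec3 {n : ℕ} (π : Equiv.Perm (Fin n)) (x y z : Fin n)
    (h1 : π x < π z) (h2 : π z < π y) (a b : Fin 3) :
    pat132 a < pat132 b ↔ π (![x,y,z] a) < π (![x,y,z] b) := by
  fin_cases a <;> fin_cases b <;>
    simp [pat132, h1, h2, h1.trans h2] <;>
    first
      | exact fun hh => absurd (hh.trans h2) (lt_irrefl _)
      | exact fun hh => absurd (h1.trans hh) (lt_irrefl _)
      | exact fun hh => absurd ((h1.trans h2).trans hh) (lt_irrefl _)
      | exact fun hh => absurd (hh.trans (h1.trans h2)) (lt_irrefl _)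
      | exact fun hh => absurd (hh.trans h1) (lt_irrefl _)
      | exact fun hh => absurd (h2.trans hh) (lt_irrefl _)
      | exact le_of_lt h1
      | exact le_of_lt h2
      | exact le_of_lt (h1.trans h2)

/-- for a 132-avoiding permutation, the values of the left-to-right
maxima are exactly the consecutive integers `π(1), π(1)+1, …, n`. -/
theorem lmax_132_consecutive (n : ℕ) (hn : 0 < n) (π : Equiv.Perm (Fin n))
    (h : AvoidsPat π pat132) :
    LMAX π = Finset.univ.filter fun v : Fin n => π ⟨0, hn⟩ ≤ v := by
  ext v
  simp only [LMAX, Finset.mem_filter, Finset.mem_univ, true_and]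
  constructor
  · rintro ⟨i, rfl, hi⟩
    rcases eq_or_ne i ⟨0, hn⟩ with hi0 | hi0
    · exact le_of_eq (by rw [hi0])
    · have hlt : (⟨0, hn⟩ : Fin n) < i := by
        rcases Fin.lt_or_lt_of_ne hi0 with h' | h'
        · exact absurd h' (by simp [Fin.lt_def])
        · exact h'
      exact le_of_lt (hi ⟨0, hn⟩ hlt)
  · intro hv
    refine ⟨π.symm v, π.apply_symm_apply v, ?_⟩
    by_contra hc
    push_neg at hc
    obtain ⟨j, hji, hjv⟩ := hc
    set i := π.symm v with hidef
    have hiv : π i = v := π.apply_symm_apply v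
    have hjne : π j ≠ v := fun hh => absurd (π.injective (hh.trans hiv.symm)) (ne_of_lt hji)
    have hjgt : v < π j := lt_of_le_of_ne hjv (Ne.symm hjne)
    have hj0 : j ≠ ⟨0, hn⟩ := by
      rintro rfl
      exact absurd hv (not_le.mpr hjgt)
    have h0lt : π ⟨0, hn⟩ < v := by
      rcases lt_or_eq_of_le hv with h' | h'
      · exact h'
      · exfalso
        have he : i = ⟨0, hn⟩ := π.injective (by rw [hiv, ← h'])
        have : j < (⟨0, hn⟩ : Fin n) := he ▸ hji
        simp [Fin.lt_def] at this
    have h0j : (⟨0, hn⟩ : Fin n) < j := by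
      rcases Fin.lt_or_lt_of_ne hj0 with h' | h'
      · exact absurd h' (by simp [Fin.lt_def])
      · exact h'
    apply h
    refine ⟨![⟨0, hn⟩, j, i], strictMono_vec3 _ _ _ h0j hji, ?_⟩
    exact pat132_vec3 π _ _ _ (hiv ▸ h0lt) (hiv ▸ hjgt)
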